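/- Let μ > 0, σ > 0, γ ∈ (0,1) with 0 < μ/(γσ²) < 1, ε ∈ (0,1), and λ ∈ (0, μ) with μ + λ < γσ². Set a = √( (1/2 − μ/σ²)² − (γ−1)(μ²−λ²)/(γσ⁴) ), b = 1/2 − μ/σ² + (γ−1)(μ−λ)/(γσ²), assume a > 0 and |b| < a, and let w(y) = ( a·tanh( artanh(b/a) − a·y ) + (μ/σ² − 1/2) ) / (γ−1). Set l = (μ−λ)/(γσ² − (μ−λ)), u = (1/(1−ε))·(μ+λ)/(γσ² − (μ+λ)), L = log(u/l), and assume L > 0 and that the terminal condition w(L) = (μ+λ)/(γσ²) holds. Then ∫₀^L w(y) dy = ( (μ/σ² − 1/2)/(γ−1) )·log( (1/(1−ε))·( (μ+λ)(γσ² − μ + λ) ) / ( (μ−λ)(γσ² − μ − λ) ) ) + ( 1/(2(γ−1)) )·log( ( (μ+λ)(γσ² − μ − λ) ) / ( (μ−λ)(γσ² − μ + λ) ) ). -/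

import Mathlib

/-- Real inverse hyperbolic tangent on (-1,1). -/
noncomputable def artanh (x : ℝ) : ℝ := (1 / 2) * Real.log ((1 + x) / (1 - x))

lemma continuous_tanh' : Continuous Real.tanh := by
  have : Real.tanh = fun x => Real.sinh x / Real.cosh x := funext Real.tanh_eq_sinh_div_cosh
  rw [this]
  exact Real.continuous_sinh.div Real.continuous_cosh (fun x => (Real.cosh_pos x).ne')

lemma tanh_artanh' (x : ℝ) (hx : |x| < 1) : Real.tanh (artanh x) = x := by
  have h1 : 0 < 1 - x := by cases abs_lt.mp hx; linarith
  have h2 : 0 < 1 + x := by cases abs_lt.mp hx; linarith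
  set t := artanh x with ht
  have key : Real.exp t ^ 2 = (1 + x) / (1 - x) := by
    rw [← Real.exp_nat_mul]
    have : (2 : ℕ) * t = Real.log ((1 + x) / (1 - x)) := by rw [ht]; unfold artanh; push_cast; ring
    rw [this, Real.exp_log (by positivity)]
  have hexp : Real.exp t ≠ 0 := Real.exp_ne_zero t
  rw [Real.tanh_eq_sinh_div_cosh, Real.sinh_eq, Real.cosh_eq, Real.exp_neg]
  have hden : Real.exp t + (Real.exp t)⁻¹ ≠ 0 := by positivity
  have key2 : Real.exp t ^ 2 * (1 - x) = 1 + x := by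
    field_simp at key; linarith
  field_simp
  linear_combination key2

lemma log_cosh_eq (t : ℝ) : Real.log (Real.cosh t) = -(1/2) * Real.log (1 - Real.tanh t ^ 2) := by
  have hc := Real.cosh_pos t
  have h : 1 - Real.tanh t ^ 2 = 1 / Real.cosh t ^ 2 := by
    rw [Real.tanh_eq_sinh_div_cosh]
    field_simp
    linarith [Real.cosh_sq_sub_sinh_sq t]
  rw [h, Real.log_div one_ne_zero (by positivity), Real.log_one, Real.log_pow]
  push_cast; ring

set_option maxHeartbeats 1000000 in
/-- Closed form of the integral of the explicit
hyperbolic-tangent Riccati solution `w` over the no-trade region `[0, L]`,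
`L = log(u/l)`, under the terminal gap condition `w(L) = (μ+λ)/(γσ²)`. -/
theorem integral_of_riccati_solution
    (μ σ γ ε lam : ℝ) (hμ : 0 < μ) (hσ : 0 < σ)
    (hγ : γ ∈ Set.Ioo (0 : ℝ) 1)
    (hmerton : 0 < μ / (γ * σ ^ 2) ∧ μ / (γ * σ ^ 2) < 1)
    (hε : ε ∈ Set.Ioo (0 : ℝ) 1) (hlam : lam ∈ Set.Ioo 0 μ)
    (hlev : μ + lam < γ * σ ^ 2)
    (a b : ℝ)
    (ha : a = Real.sqrt
      ((1 / 2 - μ / σ ^ 2) ^ 2 - (γ - 1) * (μ ^ 2 - lam ^ 2) / (γ * σ ^ 4)))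
    (hb : b = 1 / 2 - μ / σ ^ 2 + (γ - 1) * (μ - lam) / (γ * σ ^ 2))
    (hapos : 0 < a) (hba : |b| < a)
    (w : ℝ → ℝ)
    (hw : w = fun y : ℝ =>
      (a * Real.tanh (artanh (b / a) - a * y) + (μ / σ ^ 2 - 1 / 2)) / (γ - 1))
    (l u L : ℝ)
    (hl : l = (μ - lam) / (γ * σ ^ 2 - (μ - lam)))
    (hu : u = (1 / (1 - ε)) * ((μ + lam) / (γ * σ ^ 2 - (μ + lam))))
    (hL : L = Real.log (u / l)) (hLpos : 0 < L)
    (hterm : w L = (μ + lam) / (γ * σ ^ 2)) :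
    ∫ y in (0 : ℝ)..L, w y
      = ((μ / σ ^ 2 - 1 / 2) / (γ - 1))
          * Real.log ((1 / (1 - ε))
            * ((μ + lam) * (γ * σ ^ 2 - μ + lam))
            / ((μ - lam) * (γ * σ ^ 2 - μ - lam)))
        + (1 / (2 * (γ - 1)))
          * Real.log (((μ + lam) * (γ * σ ^ 2 - μ - lam))
            / ((μ - lam) * (γ * σ ^ 2 - μ + lam))) := by
  obtain ⟨hγ0, hγ1⟩ := hγ
  obtain ⟨hl0, hlμ⟩ := hlam
  obtain ⟨hε0, hε1⟩ := hε
  have hσ2 : (0:ℝ) < σ ^ 2 := by positivity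
  have hγσ : (0:ℝ) < γ * σ ^ 2 := by positivity
  have hml : 0 < μ - lam := by linarith
  have hpl : 0 < μ + lam := by linarith
  have hgm : 0 < γ * σ ^ 2 - (μ + lam) := by linarith
  have hgm2 : 0 < γ * σ ^ 2 - (μ - lam) := by linarith
  have h1ε : 0 < 1 - ε := by linarith
  have hγ1' : γ - 1 ≠ 0 := by linarith
  have hσ0 : σ ≠ 0 := hσ.ne'
  have hγ0' : γ ≠ 0 := hγ0.ne'
  have ha0 : a ≠ 0 := hapos.ne'
  -- value of a^2
  have hX : 0 ≤ (1 / 2 - μ / σ ^ 2) ^ 2 - (γ - 1) * (μ ^ 2 - lam ^ 2) / (γ * σ ^ 4) := by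
    by_contra h
    push_neg at h
    rw [ha, Real.sqrt_eq_zero_of_nonpos h.le] at hapos
    exact lt_irrefl 0 hapos
  have ha2 : a ^ 2 = (1 / 2 - μ / σ ^ 2) ^ 2 - (γ - 1) * (μ ^ 2 - lam ^ 2) / (γ * σ ^ 4) := by
    rw [ha]; exact Real.sq_sqrt hX
  set bp : ℝ := 1 / 2 - μ / σ ^ 2 + (γ - 1) * (μ + lam) / (γ * σ ^ 2) with hbp
  have hb2 : a ^ 2 - b ^ 2
      = (1 - γ) * (μ - lam) * (γ * σ ^ 2 - (μ - lam)) / (γ * σ ^ 2) ^ 2 := by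
    rw [ha2, hb]
    field_simp
    ring
  have hbp2 : a ^ 2 - bp ^ 2
      = (1 - γ) * (μ + lam) * (γ * σ ^ 2 - (μ + lam)) / (γ * σ ^ 2) ^ 2 := by
    rw [ha2, hbp]
    field_simp
    ring
  have h1γ : 0 < 1 - γ := by linarith
  have hb2pos : 0 < a ^ 2 - b ^ 2 := by
    rw [hb2]; exact div_pos (mul_pos (mul_pos h1γ hml) hgm2) (by positivity)
  have hbp2pos : 0 < a ^ 2 - bp ^ 2 := by
    rw [hbp2]; exact div_pos (mul_pos (mul_pos h1γ hpl) hgm) (by positivity)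
  have hba' : |b / a| < 1 := by
    rw [abs_div, abs_of_pos hapos]
    exact (div_lt_one hapos).mpr hba
  set c : ℝ := artanh (b / a) with hc
  have htc : Real.tanh c = b / a := tanh_artanh' _ hba'
  -- terminal condition
  have htL : Real.tanh (c - a * L) = bp / a := by
    have h := hterm
    rw [hw] at h
    simp only at h
    rw [eq_div_iff ha0]
    have hne : (γ * σ ^ 2) ≠ 0 := hγσ.ne'
    field_simp at h
    rw [hbp]
    field_simp
    linarith [h]
  -- positivity of log arguments
  have h1b : (1:ℝ) - (b / a) ^ 2 = (a ^ 2 - b ^ 2) / a ^ 2 := by field_simp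
  have h1bp : (1:ℝ) - (bp / a) ^ 2 = (a ^ 2 - bp ^ 2) / a ^ 2 := by field_simp
  have h1bpos : 0 < (1:ℝ) - (b / a) ^ 2 := by rw [h1b]; positivity
  have h1bppos : 0 < (1:ℝ) - (bp / a) ^ 2 := by rw [h1bp]; positivity
  -- antiderivative
  set m : ℝ := μ / σ ^ 2 - 1 / 2 with hm
  set F : ℝ → ℝ := fun y => (m * y - Real.log (Real.cosh (c - a * y))) / (γ - 1) with hF
  have hder : ∀ y ∈ Set.uIcc (0:ℝ) L, HasDerivAt F (w y) y := by
    intro y _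
    have h1 : HasDerivAt (fun y : ℝ => c - a * y) (-a) y := by
      simpa using ((hasDerivAt_id' y).const_mul a).const_sub c
    have h2 : HasDerivAt (fun y : ℝ => Real.cosh (c - a * y))
        (Real.sinh (c - a * y) * (-a)) y := (Real.hasDerivAt_cosh _).comp y h1
    have h3 : HasDerivAt (fun y : ℝ => Real.log (Real.cosh (c - a * y)))
        (Real.sinh (c - a * y) * (-a) / Real.cosh (c - a * y)) y :=
      h2.log (Real.cosh_pos _).ne'
    have h4 := (((hasDerivAt_id y).const_mul m).sub h3).div_const (γ - 1)
    refine h4.congr_deriv ?_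
    rw [hw]
    simp only [Real.tanh_eq_sinh_div_cosh]
    have hcc := (Real.cosh_pos (c - a * y)).ne'
    field_simp
    ring
  have hwc : Continuous w := by
    rw [hw]
    exact ((continuous_const.mul (continuous_tanh'.comp
      (continuous_const.sub (continuous_const.mul continuous_id)))).add
      continuous_const).div_const _
  have hIeq : ∫ y in (0:ℝ)..L, w y = F L - F 0 :=
    intervalIntegral.integral_eq_sub_of_hasDerivAt hder (hwc.intervalIntegrable _ _)
  -- nonzero denominators in convenient syntactic forms
  have hn1 : (1:ℝ) - ε ≠ 0 := h1ε.ne'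
  have hn2 : μ - lam ≠ 0 := hml.ne'
  have hn3 : μ + lam ≠ 0 := hpl.ne'
  have hn4 : γ * σ ^ 2 - (μ + lam) ≠ 0 := hgm.ne'
  have hn5 : γ * σ ^ 2 - (μ - lam) ≠ 0 := hgm2.ne'
  have hn6 : γ * σ ^ 2 - μ - lam ≠ 0 := by intro h; apply hn4; linarith
  have hn7 : γ * σ ^ 2 - μ + lam ≠ 0 := by intro h; apply hn5; linarith
  -- log identities
  have hLlog : Real.log ((1 / (1 - ε))
      * ((μ + lam) * (γ * σ ^ 2 - μ + lam))
      / ((μ - lam) * (γ * σ ^ 2 - μ - lam))) = L := by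
    rw [hL, hu, hl]
    congr 1
    field_simp [hn1, hn2, hn4, hn5, hn6, hn7]
    ring
  have harg : ((μ + lam) * (γ * σ ^ 2 - μ - lam)) / ((μ - lam) * (γ * σ ^ 2 - μ + lam))
      = (1 - (bp / a) ^ 2) / (1 - (b / a) ^ 2) := by
    rw [h1b, h1bp, hb2, hbp2]
    field_simp [hn2, hn3, hn6, hn7, h1γ.ne']
    ring
  have hK2 : Real.log (((μ + lam) * (γ * σ ^ 2 - μ - lam))
      / ((μ - lam) * (γ * σ ^ 2 - μ + lam)))
      = Real.log (1 - (bp / a) ^ 2) - Real.log (1 - (b / a) ^ 2) := by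
    rw [harg, Real.log_div h1bppos.ne' h1bpos.ne']
  -- put everything together
  rw [hIeq, hLlog, hK2, hF]
  simp only
  rw [show c - a * 0 = c by ring]
  simp only [log_cosh_eq, htL, htc]
  field_simp
  ring
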